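/- Let X be a finite-dimensional Banach space and T = {T(t,s) : t, s > a₀} an invertible evolution family on X. Let a₀* > a₀ and assume T exhibits bounded growth and bounded decay on [a₀*,∞). Then the following are equivalent: (a) T admits an exponential dichotomy on [a₀*,∞); (b) T is exponentially expansive on [a₀*,∞); (c) T is uniformly noncritical on [a₀*,∞). -/

import Mathlib

open Set Real

noncomputable section

variable {X : Type*} [NormedAddCommGroup X] [NormedSpace ℝ X] [CompleteSpace X]

/-- An invertible evolution family on `X` with parameter `a₀ ∈ ℝ ∪ {-∞}` (modelled as
`EReal`), viewed as a two-parameter family `T t s` for all `t, s > a₀` (for `t < s`,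
`T t s` is the inverse of `T s t`): `T t t = Id` for `t > a₀`; the two-sided cocycle
identity `T t s ∘ T s r = T t r` holds for all `t, s, r > a₀`; and for every `s > a₀`
and `v ∈ X`, the map `t ↦ T t s v` is continuous on `[s, ∞)`. -/
def IsInvertibleEvolutionFamily (a₀ : EReal) (T : ℝ → ℝ → X →L[ℝ] X) : Prop :=
  (∀ t : ℝ, a₀ < (t : EReal) → T t t = ContinuousLinearMap.id ℝ X) ∧
  (∀ t s r : ℝ, a₀ < (t : EReal) → a₀ < (s : EReal) → a₀ < (r : EReal) →
    (T t s).comp (T s r) = T t r) ∧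
  (∀ s : ℝ, a₀ < (s : EReal) → ∀ v : X, ContinuousOn (fun t => T t s v) (Set.Ici s))

/-- `T` exhibits bounded growth on `J`: there are `K, μ > 0` with
`‖T t s‖ ≤ K e^{μ (t-s)}` for all `t, s ∈ J` with `t ≥ s`. -/
def BoundedGrowthOn (T : ℝ → ℝ → X →L[ℝ] X) (J : Set ℝ) : Prop :=
  ∃ K : ℝ, 0 < K ∧ ∃ μ : ℝ, 0 < μ ∧
    ∀ t ∈ J, ∀ s ∈ J, s ≤ t → ‖T t s‖ ≤ K * Real.exp (μ * (t - s))

/-- `T` exhibits bounded decay on `J`: there are `K, μ > 0` with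
`‖T t s‖ ≤ K e^{μ (s-t)}` for all `t, s ∈ J` with `t ≤ s`. -/
def BoundedDecayOn (T : ℝ → ℝ → X →L[ℝ] X) (J : Set ℝ) : Prop :=
  ∃ K : ℝ, 0 < K ∧ ∃ μ : ℝ, 0 < μ ∧
    ∀ t ∈ J, ∀ s ∈ J, t ≤ s → ‖T t s‖ ≤ K * Real.exp (μ * (s - t))

/-- The family of projections `P` with constants `D, lam` witnesses an exponential
dichotomy of the invertible evolution family `T` on `J`: the `P t` are projections
commuting with the evolution family, `T t s` restricted to `Ker P s` is a bijection onto
`Ker P t` for `t ≥ s` in `J`, `‖T t s ∘ P s‖ ≤ D e^{-lam (t-s)}` for `t ≥ s` in `J`, and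
`‖T t s ∘ (Id - P s)‖ ≤ D e^{-lam (s-t)}` for `t ≤ s` in `J`. -/
def ExpDichotomyProjWith (T : ℝ → ℝ → X →L[ℝ] X) (J : Set ℝ)
    (P : ℝ → X →L[ℝ] X) (D lam : ℝ) : Prop :=
  (∀ t ∈ J, (P t).comp (P t) = P t) ∧
  (∀ t ∈ J, ∀ s ∈ J, s ≤ t → (P t).comp (T t s) = (T t s).comp (P s)) ∧
  (∀ t ∈ J, ∀ s ∈ J, s ≤ t →
    Set.BijOn (T t s) (LinearMap.ker (P s : X →ₗ[ℝ] X) : Set X) (LinearMap.ker (P t : X →ₗ[ℝ] X) : Set X)) ∧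
  (∀ t ∈ J, ∀ s ∈ J, s ≤ t →
    ‖(T t s).comp (P s)‖ ≤ D * Real.exp (-lam * (t - s))) ∧
  (∀ t ∈ J, ∀ s ∈ J, t ≤ s →
    ‖(T t s).comp (ContinuousLinearMap.id ℝ X - P s)‖ ≤ D * Real.exp (-lam * (s - t)))

/-- `T` admits an exponential dichotomy on `J`. -/
def ExpDichotomyOn (T : ℝ → ℝ → X →L[ℝ] X) (J : Set ℝ) : Prop :=
  ∃ (P : ℝ → X →L[ℝ] X) (D lam : ℝ), 0 < D ∧ 0 < lam ∧ ExpDichotomyProjWith T J P D lam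

/-- `T` is exponentially expansive on `J`: there are `L, β > 0` with
`‖v‖ ≤ L (e^{-β (t-a)} ‖T a t v‖ + e^{-β (b-t)} ‖T b t v‖)` for every `v ∈ X` and all
`a ≤ t ≤ b` with `[a, b] ⊆ J`. -/
def ExpExpansiveOn (T : ℝ → ℝ → X →L[ℝ] X) (J : Set ℝ) : Prop :=
  ∃ L : ℝ, 0 < L ∧ ∃ β : ℝ, 0 < β ∧
    ∀ (v : X) (a t b : ℝ), a ≤ t → t ≤ b → Set.Icc a b ⊆ J →
      ‖v‖ ≤ L * (Real.exp (-β * (t - a)) * ‖T a t v‖ +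
        Real.exp (-β * (b - t)) * ‖T b t v‖)

/-- `T` (with parameter `a₀`) is uniformly noncritical on `[a₀*, ∞)`: there are
`θ ∈ (0, 1)` and `C > 0` such that `‖v‖ ≤ θ sup {‖T u t v‖ : |u - t| ≤ C}` for every
`v ∈ X` and every `t ≥ a₀* + C`; the inequality against the supremum is expressed
equivalently via arbitrary upper bounds `M` of `{‖T u t v‖ : |u - t| ≤ C}`. -/
def UnifNoncriticalOn (a₀ : EReal) (T : ℝ → ℝ → X →L[ℝ] X) (astar : ℝ) : Prop :=
  ∃ θ : ℝ, 0 < θ ∧ θ < 1 ∧ ∃ C : ℝ, 0 < C ∧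
    ∀ (v : X) (t : ℝ), a₀ < (t : EReal) → astar + C ≤ t →
      ∀ M : ℝ, (∀ u : ℝ, a₀ < (u : EReal) → |u - t| ≤ C → ‖T u t v‖ ≤ M) → ‖v‖ ≤ θ * M

set_option linter.unusedSectionVars false
set_option maxHeartbeats 1000000

namespace EvolAux
variable {a₀ : EReal} {T : ℝ → ℝ → X →L[ℝ] X} {astar : ℝ}

lemma gt_a0 (hastar : a₀ < (astar : EReal)) {x : ℝ} (hx : astar ≤ x) : a₀ < (x : EReal) :=
  lt_of_lt_of_le hastar (by exact_mod_cast hx)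

lemma cocycle_apply (hT : IsInvertibleEvolutionFamily a₀ T) {t s r : ℝ}
    (ht : a₀ < (t : EReal)) (hs : a₀ < (s : EReal)) (hr : a₀ < (r : EReal)) (v : X) :
    T t s (T s r v) = T t r v := by
  have h := hT.2.1 t s r ht hs hr
  have := congrArg (fun f : X →L[ℝ] X => f v) h
  simpa using this

lemma id_apply (hT : IsInvertibleEvolutionFamily a₀ T) {t : ℝ}
    (ht : a₀ < (t : EReal)) (v : X) : T t t v = v := by
  rw [hT.1 t ht]; rfl

lemma dicho_to_exp (hT : IsInvertibleEvolutionFamily a₀ T)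
    (hastar : a₀ < (astar : EReal)) :
    ExpDichotomyOn T (Set.Ici astar) → ExpExpansiveOn T (Set.Ici astar) := by
  rintro ⟨P, D, lam, hD, hlam, hproj, hcomm, hbij, hst, hun⟩
  refine ⟨D, hD, lam, hlam, ?_⟩
  intro v a t b hat htb hsub
  have ha : astar ≤ a := hsub ⟨le_refl a, hat.trans htb⟩
  have ht : astar ≤ t := hsub ⟨hat, htb⟩
  have hb : astar ≤ b := hsub ⟨hat.trans htb, le_refl b⟩
  have ha' := gt_a0 hastar ha
  have ht' := gt_a0 hastar ht
  have hb' := gt_a0 hastar hb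
  -- stable part
  have h1 : P t v = ((T t a).comp (P a)) (T a t v) := by
    have hc := hcomm t ht a ha hat
    have hw := congrArg (fun f : X →L[ℝ] X => f (T a t v)) hc
    simp only [ContinuousLinearMap.comp_apply] at hw
    rw [cocycle_apply hT ht' ha' ht' v, id_apply hT ht' v] at hw
    simpa [ContinuousLinearMap.comp_apply] using hw
  have hs1 : ‖P t v‖ ≤ D * Real.exp (-lam * (t - a)) * ‖T a t v‖ := by
    rw [h1]
    calc ‖((T t a).comp (P a)) (T a t v)‖ ≤ ‖(T t a).comp (P a)‖ * ‖T a t v‖ :=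
      ContinuousLinearMap.le_opNorm _ _
    _ ≤ D * Real.exp (-lam * (t - a)) * ‖T a t v‖ := by
        apply mul_le_mul_of_nonneg_right (hst t ht a ha hat) (norm_nonneg _)
  -- unstable part
  have h2 : v - P t v = ((T t b).comp (ContinuousLinearMap.id ℝ X - P b)) (T b t v) := by
    have hc := hcomm b hb t ht htb
    have hw := congrArg (fun f : X →L[ℝ] X => f v) hc
    simp only [ContinuousLinearMap.comp_apply] at hw
    -- hw : P b (T b t v) = T b t (P t v)
    simp only [ContinuousLinearMap.comp_apply, ContinuousLinearMap.sub_apply,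
      ContinuousLinearMap.id_apply, map_sub, hw]
    rw [cocycle_apply hT ht' hb' ht' v, id_apply hT ht' v,
      cocycle_apply hT ht' hb' ht' (P t v), id_apply hT ht' (P t v)]
  have hs2 : ‖v - P t v‖ ≤ D * Real.exp (-lam * (b - t)) * ‖T b t v‖ := by
    rw [h2]
    calc ‖((T t b).comp (ContinuousLinearMap.id ℝ X - P b)) (T b t v)‖
        ≤ ‖(T t b).comp (ContinuousLinearMap.id ℝ X - P b)‖ * ‖T b t v‖ :=
      ContinuousLinearMap.le_opNorm _ _
    _ ≤ D * Real.exp (-lam * (b - t)) * ‖T b t v‖ := by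
        apply mul_le_mul_of_nonneg_right (hun t ht b hb htb) (norm_nonneg _)
  calc ‖v‖ = ‖P t v + (v - P t v)‖ := by congr 1; abel
  _ ≤ ‖P t v‖ + ‖v - P t v‖ := norm_add_le _ _
  _ ≤ D * Real.exp (-lam * (t - a)) * ‖T a t v‖ + D * Real.exp (-lam * (b - t)) * ‖T b t v‖ :=
      add_le_add hs1 hs2
  _ = D * (Real.exp (-lam * (t - a)) * ‖T a t v‖ + Real.exp (-lam * (b - t)) * ‖T b t v‖) := by
      ring

lemma exp_to_noncrit (hT : IsInvertibleEvolutionFamily a₀ T)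
    (hastar : a₀ < (astar : EReal)) :
    ExpExpansiveOn T (Set.Ici astar) → UnifNoncriticalOn a₀ T astar := by
  rintro ⟨L, hL, β, hβ, hexp⟩
  set C : ℝ := (|Real.log (2 * L)| + 1) / β with hCdef
  have hCpos : 0 < C := div_pos (by positivity) hβ
  set θ : ℝ := 2 * L * Real.exp (-β * C) with hθdef
  have hθpos : 0 < θ := by positivity
  have hθlt : θ < 1 := by
    have h2L : (0:ℝ) < 2 * L := by linarith
    have h1 : Real.log (2 * L) ≤ |Real.log (2 * L)| := le_abs_self _
    have hbc : β * C = |Real.log (2 * L)| + 1 := by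
      rw [hCdef, mul_comm, div_mul_cancel₀ _ hβ.ne']
    have : θ = Real.exp (Real.log (2 * L) + (-β * C)) := by
      rw [Real.exp_add, Real.exp_log h2L]
    rw [this]
    have : Real.log (2 * L) + (-β * C) ≤ -1 := by
      have : -β * C = -(|Real.log (2 * L)| + 1) := by rw [neg_mul, hbc]
      rw [this]; linarith
    calc Real.exp (Real.log (2 * L) + (-β * C)) ≤ Real.exp (-1) := Real.exp_le_exp.mpr this
    _ < 1 := Real.exp_lt_one_iff.mpr (by norm_num)
  refine ⟨θ, hθpos, hθlt, C, hCpos, ?_⟩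
  intro v t ht htC M hM
  have h1 : ‖T (t - C) t v‖ ≤ M := by
    refine hM (t - C) (gt_a0 hastar (by linarith)) ?_
    rw [abs_of_nonpos (by linarith)]; linarith
  have h2 : ‖T (t + C) t v‖ ≤ M := by
    refine hM (t + C) (gt_a0 hastar (by linarith)) ?_
    rw [abs_of_nonneg (by linarith)]; linarith
  have hsub : Set.Icc (t - C) (t + C) ⊆ Set.Ici astar := by
    intro x hx
    have := hx.1
    simp only [Set.mem_Ici]
    linarith
  have := hexp v (t - C) t (t + C) (by linarith) (by linarith) hsub
  have he1 : t - (t - C) = C := by ring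
  have he2 : t + C - t = C := by ring
  rw [he1, he2] at this
  have hexpnn : 0 ≤ Real.exp (-β * C) := (Real.exp_pos _).le
  calc ‖v‖ ≤ L * (Real.exp (-β * C) * ‖T (t - C) t v‖ + Real.exp (-β * C) * ‖T (t + C) t v‖) :=
        this
  _ ≤ L * (Real.exp (-β * C) * M + Real.exp (-β * C) * M) := by
      apply mul_le_mul_of_nonneg_left _ hL.le
      exact add_le_add (mul_le_mul_of_nonneg_left h1 hexpnn)
        (mul_le_mul_of_nonneg_left h2 hexpnn)
  _ = θ * M := by rw [hθdef]; ring


/-- continuity of `τ ↦ ‖T τ t₀ v‖` on `[astar, ∞)` for any base `t₀ > a₀`. -/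
lemma norm_continuousOn (hT : IsInvertibleEvolutionFamily a₀ T)
    (hastar : a₀ < (astar : EReal)) {t₀ : ℝ} (ht₀ : a₀ < (t₀ : EReal)) (v : X) :
    ContinuousOn (fun τ => ‖T τ t₀ v‖) (Set.Ici astar) := by
  have h := hT.2.2 astar (gt_a0 hastar le_rfl) (T astar t₀ v)
  have h2 : ContinuousOn (fun τ => T τ t₀ v) (Set.Ici astar) := by
    apply h.congr
    intro τ hτ
    exact (cocycle_apply hT (gt_a0 hastar hτ) (gt_a0 hastar le_rfl) ht₀ v).symm
  exact h2.norm

lemma noncrit_to_exp (hT : IsInvertibleEvolutionFamily a₀ T)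
    (hastar : a₀ < (astar : EReal))
    (hgrowth : BoundedGrowthOn T (Set.Ici astar))
    (hdecay : BoundedDecayOn T (Set.Ici astar)) :
    UnifNoncriticalOn a₀ T astar → ExpExpansiveOn T (Set.Ici astar) := by
  rintro ⟨θ, hθ0, hθ1, C, hC, hnc⟩
  obtain ⟨K₁, hK₁, μ₁, hμ₁, hg₁⟩ := hgrowth
  obtain ⟨K₂, hK₂, μ₂, hμ₂, hd₂⟩ := hdecay
  set K : ℝ := max K₁ K₂ with hKdef
  set μ : ℝ := max μ₁ μ₂ with hμdef
  have hK : 0 < K := lt_of_lt_of_le hK₁ (le_max_left _ _)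
  have hμ : 0 < μ := lt_of_lt_of_le hμ₁ (le_max_left _ _)
  have hgrow : ∀ t s : ℝ, astar ≤ s → s ≤ t → ‖T t s‖ ≤ K * Real.exp (μ * (t - s)) := by
    intro t s hs hst
    refine (hg₁ t (hs.trans hst) s hs hst).trans ?_
    have : Real.exp (μ₁ * (t - s)) ≤ Real.exp (μ * (t - s)) :=
      Real.exp_le_exp.mpr (mul_le_mul_of_nonneg_right (le_max_left _ _) (by linarith))
    exact mul_le_mul (le_max_left _ _) this (Real.exp_pos _).le hK.le
  have hdec : ∀ t s : ℝ, astar ≤ t → t ≤ s → ‖T t s‖ ≤ K * Real.exp (μ * (s - t)) := by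
    intro t s ht hts
    refine (hd₂ t ht s (ht.trans hts) hts).trans ?_
    have : Real.exp (μ₂ * (s - t)) ≤ Real.exp (μ * (s - t)) :=
      Real.exp_le_exp.mpr (mul_le_mul_of_nonneg_right (le_max_right _ _) (by linarith))
    exact mul_le_mul (le_max_right _ _) this (Real.exp_pos _).le hK.le
  have hθinv : 1 < θ⁻¹ := by rw [lt_inv_comm₀ (by norm_num) hθ0]; simpa using hθ1
  set lam : ℝ := Real.log θ⁻¹ / C with hlamdef
  have hlam : 0 < lam := div_pos (Real.log_pos hθinv) hC
  have hlamC : lam * C = Real.log θ⁻¹ := by rw [hlamdef, div_mul_cancel₀ _ hC.ne']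
  have hexpθ : Real.exp (-(lam * C)) = θ := by
    rw [hlamC, Real.log_inv, neg_neg, Real.exp_log hθ0]
  have hexpθinv : Real.exp (lam * C) = θ⁻¹ := by
    rw [← Real.exp_log (by positivity : (0:ℝ) < θ⁻¹), hlamC]
  have hpow : ∀ (k : ℕ) (x : ℝ), x ≤ C * k → θ ^ k ≤ Real.exp (-lam * x) := by
    intro k x hx
    have h1 : θ ^ k = Real.exp ((k : ℝ) * (-(lam * C))) := by
      rw [Real.exp_nat_mul, hexpθ]
    rw [h1]
    apply Real.exp_le_exp.mpr
    have : lam * x ≤ lam * (C * k) := mul_le_mul_of_nonneg_left hx hlam.le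
    nlinarith
  set L : ℝ := θ⁻¹ * (K * Real.exp (μ * C)) with hLdef
  have hL : 0 < L := by positivity
  refine ⟨L, hL, lam, hlam, ?_⟩
  intro v a t₀ b hat htb hsub
  have ha : astar ≤ a := hsub ⟨le_refl a, hat.trans htb⟩
  have ht₀ : astar ≤ t₀ := hsub ⟨hat, htb⟩
  have hb : astar ≤ b := hsub ⟨hat.trans htb, le_refl b⟩
  have ha' := gt_a0 hastar ha
  have ht₀' := gt_a0 hastar ht₀
  have hb' := gt_a0 hastar hb
  set g : ℝ → ℝ := fun τ => ‖T τ t₀ v‖ with hgdef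
  have hgnn : ∀ τ, 0 ≤ g τ := fun τ => norm_nonneg _
  have hgcont : ContinuousOn g (Set.Ici astar) := norm_continuousOn hT hastar ht₀' v
  have hgt₀ : g t₀ = ‖v‖ := by simp only [hgdef]; rw [id_apply hT ht₀' v]
  -- bounds of g against endpoints
  have hga : ∀ τ, astar ≤ τ → a - C ≤ τ → τ ≤ a + C → g τ ≤ K * Real.exp (μ * C) * g a := by
    intro τ hτ hτlo hτa
    have h1 : T τ t₀ v = T τ a (T a t₀ v) := (cocycle_apply hT (gt_a0 hastar hτ) ha' ht₀' v).symm
    have h2 : ‖T τ a (T a t₀ v)‖ ≤ ‖T τ a‖ * g a := ContinuousLinearMap.le_opNorm _ _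
    have h3 : ‖T τ a‖ ≤ K * Real.exp (μ * C) := by
      rcases le_or_gt a τ with hcase | hcase
      · refine (hgrow τ a ha hcase).trans ?_
        exact mul_le_mul_of_nonneg_left
          (Real.exp_le_exp.mpr (mul_le_mul_of_nonneg_left (by linarith) hμ.le)) hK.le
      · refine (hdec τ a hτ hcase.le).trans ?_
        refine mul_le_mul_of_nonneg_left (Real.exp_le_exp.mpr ?_) hK.le
        exact mul_le_mul_of_nonneg_left (by linarith) hμ.le
    calc g τ = ‖T τ a (T a t₀ v)‖ := by rw [hgdef]; simp only []; rw [h1]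
    _ ≤ ‖T τ a‖ * g a := h2
    _ ≤ K * Real.exp (μ * C) * g a := mul_le_mul_of_nonneg_right h3 (hgnn a)
  have hgb : ∀ τ, b ≤ τ → τ ≤ b + C → g τ ≤ K * Real.exp (μ * C) * g b := by
    intro τ hbτ hτb
    have h1 : T τ t₀ v = T τ b (T b t₀ v) :=
      (cocycle_apply hT (gt_a0 hastar (hb.trans hbτ)) hb' ht₀' v).symm
    have h3 : ‖T τ b‖ ≤ K * Real.exp (μ * C) := by
      refine (hgrow τ b hb hbτ).trans ?_
      exact mul_le_mul_of_nonneg_left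
        (Real.exp_le_exp.mpr (mul_le_mul_of_nonneg_left (by linarith) hμ.le)) hK.le
    calc g τ = ‖T τ b (T b t₀ v)‖ := by rw [hgdef]; simp only []; rw [h1]
    _ ≤ ‖T τ b‖ * g b := ContinuousLinearMap.le_opNorm _ _
    _ ≤ K * Real.exp (μ * C) * g b := mul_le_mul_of_nonneg_right h3 (hgnn b)
  -- stop propositions
  set goalP : Prop := ‖v‖ ≤ L * (Real.exp (-lam * (t₀ - a)) * ‖T a t₀ v‖ +
      Real.exp (-lam * (b - t₀)) * ‖T b t₀ v‖) with hgoalP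
  have hstopA : ∀ k : ℕ, ∀ τ : ℝ, astar ≤ τ → a - C ≤ τ → τ ≤ a + C → t₀ - C * k ≤ τ →
      ‖v‖ ≤ θ ^ k * g τ → goalP := by
    intro k τ hτ hτlo hτa hτk hvk
    have h1 : θ ^ k ≤ Real.exp (-lam * (t₀ - τ)) := hpow k _ (by linarith)
    have h2 : Real.exp (-lam * (t₀ - τ)) ≤ Real.exp (lam * C) * Real.exp (-lam * (t₀ - a)) := by
      rw [← Real.exp_add]
      apply Real.exp_le_exp.mpr
      nlinarith [hlam.le]
    have h3 : ‖v‖ ≤ θ⁻¹ * Real.exp (-lam * (t₀ - a)) * (K * Real.exp (μ * C) * g a) := by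
      calc ‖v‖ ≤ θ ^ k * g τ := hvk
      _ ≤ (Real.exp (lam * C) * Real.exp (-lam * (t₀ - a))) * g τ :=
          mul_le_mul_of_nonneg_right (h1.trans h2) (hgnn τ)
      _ ≤ (Real.exp (lam * C) * Real.exp (-lam * (t₀ - a))) * (K * Real.exp (μ * C) * g a) := by
          apply mul_le_mul_of_nonneg_left (hga τ hτ hτlo hτa) (by positivity)
      _ = θ⁻¹ * Real.exp (-lam * (t₀ - a)) * (K * Real.exp (μ * C) * g a) := by
          rw [hexpθinv]
    rw [hgoalP]
    have hterm2 : 0 ≤ L * (Real.exp (-lam * (b - t₀)) * ‖T b t₀ v‖) := by positivity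
    have : ‖v‖ ≤ L * (Real.exp (-lam * (t₀ - a)) * ‖T a t₀ v‖) := by
      rw [hLdef]
      calc ‖v‖ ≤ θ⁻¹ * Real.exp (-lam * (t₀ - a)) * (K * Real.exp (μ * C) * g a) := h3
      _ = θ⁻¹ * (K * Real.exp (μ * C)) * (Real.exp (-lam * (t₀ - a)) * ‖T a t₀ v‖) := by
          rw [hgdef]; ring
    nlinarith [this, hterm2]
  have hstopB : ∀ k : ℕ, ∀ τ : ℝ, b ≤ τ → τ ≤ b + C → τ ≤ t₀ + C * k →
      ‖v‖ ≤ θ ^ k * g τ → goalP := by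
    intro k τ hbτ hτb hτk hvk
    have h1 : θ ^ k ≤ Real.exp (-lam * (τ - t₀)) := hpow k _ (by linarith)
    have h2 : Real.exp (-lam * (τ - t₀)) ≤ Real.exp (-lam * (b - t₀)) := by
      apply Real.exp_le_exp.mpr; nlinarith [hlam.le]
    have h3 : ‖v‖ ≤ Real.exp (-lam * (b - t₀)) * (K * Real.exp (μ * C) * g b) := by
      calc ‖v‖ ≤ θ ^ k * g τ := hvk
      _ ≤ Real.exp (-lam * (b - t₀)) * g τ :=
          mul_le_mul_of_nonneg_right (h1.trans h2) (hgnn τ)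
      _ ≤ Real.exp (-lam * (b - t₀)) * (K * Real.exp (μ * C) * g b) :=
          mul_le_mul_of_nonneg_left (hgb τ hbτ hτb) (Real.exp_pos _).le
    rw [hgoalP]
    have hterm1 : 0 ≤ L * (Real.exp (-lam * (t₀ - a)) * ‖T a t₀ v‖) := by positivity
    have hKL : K * Real.exp (μ * C) ≤ L := by
      rw [hLdef]
      nlinarith [hθinv, (by positivity : (0:ℝ) < K * Real.exp (μ * C))]
    have : ‖v‖ ≤ L * (Real.exp (-lam * (b - t₀)) * ‖T b t₀ v‖) := by
      calc ‖v‖ ≤ Real.exp (-lam * (b - t₀)) * (K * Real.exp (μ * C) * g b) := h3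
      _ = (K * Real.exp (μ * C)) * (Real.exp (-lam * (b - t₀)) * ‖T b t₀ v‖) := by
          rw [hgdef]; ring
      _ ≤ L * (Real.exp (-lam * (b - t₀)) * ‖T b t₀ v‖) := by
          apply mul_le_mul_of_nonneg_right hKL (by positivity)
    nlinarith [this, hterm1]
  -- main induction
  have main : ∀ k : ℕ, goalP ∨ ∃ τ : ℝ, τ ∈ Set.Icc a b ∧ ‖v‖ ≤ θ ^ k * g τ ∧
      t₀ - C * k ≤ τ ∧ τ ≤ t₀ + C * k := by
    intro k
    induction k with
    | zero =>
      right
      exact ⟨t₀, ⟨hat, htb⟩, by rw [pow_zero, one_mul, hgt₀], by simp, by simp⟩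
    | succ k ih =>
      rcases ih with hgoal | ⟨τ, ⟨haτ, hτb⟩, hvk, hτlo, hτhi⟩
      · exact Or.inl hgoal
      rcases lt_or_ge τ (astar + C) with hcase | hcase
      · -- case A : stop at a-side
        left
        exact hstopA k τ (ha.trans haτ) (by linarith) (by linarith) (by linarith) hvk
      · -- case B : apply noncriticality at τ
        have hτstar : astar ≤ τ := by linarith
        have hτ' := gt_a0 hastar hτstar
        have hsubIcc : Set.Icc (τ - C) (τ + C) ⊆ Set.Ici astar := by
          intro x hx; have := hx.1; simp only [Set.mem_Ici]; linarith
        obtain ⟨τ', hτ'mem, hτ'max⟩ :=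
          isCompact_Icc.exists_isMaxOn (Set.nonempty_Icc.mpr (by linarith))
            (hgcont.mono hsubIcc)
        have hncbound : ∀ u : ℝ, a₀ < (u : EReal) → |u - τ| ≤ C → ‖T u τ (T τ t₀ v)‖ ≤ g τ' := by
          intro u hu habs
          rw [cocycle_apply hT hu hτ' ht₀' v]
          rcases abs_le.mp habs with ⟨hlo, hhi⟩
          exact hτ'max ⟨by linarith, by linarith⟩
        have hτθ : g τ ≤ θ * g τ' := by
          have := hnc (T τ t₀ v) τ hτ' (by linarith) (g τ') hncbound
          exact this
        have hvk1 : ‖v‖ ≤ θ ^ (k + 1) * g τ' := by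
          calc ‖v‖ ≤ θ ^ k * g τ := hvk
          _ ≤ θ ^ k * (θ * g τ') := mul_le_mul_of_nonneg_left hτθ (by positivity)
          _ = θ ^ (k + 1) * g τ' := by ring
        have hτ'lo : τ - C ≤ τ' := hτ'mem.1
        have hτ'hi : τ' ≤ τ + C := hτ'mem.2
        rcases lt_or_ge τ' a with hca | hca
        · -- escaped below a : decay bound
          left
          have hτ'star : astar ≤ τ' := by
            have : astar ≤ τ - C := by linarith
            linarith [hτ'lo]
          exact hstopA (k+1) τ' hτ'star (by linarith) (by linarith)
            (by push_cast; linarith) hvk1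
        rcases lt_or_ge b τ' with hcb | hcb
        · -- escaped above b : growth bound
          left
          exact hstopB (k+1) τ' hcb.le (by linarith) (by push_cast; linarith) hvk1
        · right
          exact ⟨τ', ⟨hca, hcb⟩, hvk1, by push_cast; linarith, by push_cast; linarith⟩
  -- termination
  rcases eq_or_lt_of_le (norm_nonneg v) with hv0 | hv0
  · rw [hgoalP] at *
    have : ‖v‖ = 0 := hv0.symm
    rw [this]
    positivity
  · obtain ⟨σ, hσmem, hσmax⟩ :=
      isCompact_Icc.exists_isMaxOn (Set.nonempty_Icc.mpr (hat.trans htb))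
        (hgcont.mono (fun x hx => le_trans ha hx.1))
    have hM₀pos : 0 < g σ := lt_of_lt_of_le (by rw [← hgt₀] at hv0; exact hv0)
        (hσmax ⟨hat, htb⟩)
    obtain ⟨k, hk⟩ := exists_pow_lt_of_lt_one (div_pos hv0 hM₀pos) hθ1
    rcases main k with hgoal | ⟨τ, hτmem, hvk, _, _⟩
    · exact hgoal
    · exfalso
      have h1 : g τ ≤ g σ := hσmax hτmem
      have h2 : ‖v‖ ≤ θ ^ k * g σ := hvk.trans (mul_le_mul_of_nonneg_left h1 (by positivity))
      have h3 : θ ^ k * g σ < ‖v‖ := by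
        have := (lt_div_iff₀ hM₀pos).mp hk
        linarith [mul_comm (θ ^ k) (g σ)]
      linarith


section ExpToDicho

variable (hT : IsInvertibleEvolutionFamily a₀ T) (hastar : a₀ < (astar : EReal))
  {L β : ℝ} (hL : 0 < L) (hβ : 0 < β)
  (hexp : ∀ (v : X) (a t b : ℝ), a ≤ t → t ≤ b → Set.Icc a b ⊆ Set.Ici astar →
      ‖v‖ ≤ L * (Real.exp (-β * (t - a)) * ‖T a t v‖ +
        Real.exp (-β * (b - t)) * ‖T b t v‖))

/-- The stable subspace at time `astar`. -/
def Ssub (T : ℝ → ℝ → X →L[ℝ] X) (astar : ℝ) : Submodule ℝ X where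
  carrier := {w | ∃ M : ℝ, ∀ t, astar ≤ t → ‖T t astar w‖ ≤ M}
  add_mem' := by
    rintro x y ⟨M, hM⟩ ⟨N, hN⟩
    refine ⟨M + N, fun t ht => ?_⟩
    calc ‖T t astar (x + y)‖ = ‖T t astar x + T t astar y‖ := by rw [map_add]
    _ ≤ ‖T t astar x‖ + ‖T t astar y‖ := norm_add_le _ _
    _ ≤ M + N := add_le_add (hM t ht) (hN t ht)
  zero_mem' := ⟨0, fun t ht => by simp⟩
  smul_mem' := by
    rintro cc x ⟨M, hM⟩
    refine ⟨|cc| * M, fun t ht => ?_⟩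
    rw [map_smul, norm_smul, Real.norm_eq_abs]
    exact mul_le_mul_of_nonneg_left (hM t ht) (abs_nonneg cc)

lemma mem_Ssub {w : X} : w ∈ Ssub T astar ↔ ∃ M : ℝ, ∀ t, astar ≤ t → ‖T t astar w‖ ≤ M :=
  Iff.rfl

include hT hastar hL hβ hexp in
/-- Claim A : uniform exponential decay of bounded solutions. -/
lemma claimA : ∀ w ∈ Ssub T astar, ∀ s t : ℝ, astar ≤ s → s ≤ t →
    ‖T t astar w‖ ≤ L * Real.exp (-β * (t - s)) * ‖T s astar w‖ := by
  rintro w ⟨M, hM⟩ s t hs hst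
  have ht : astar ≤ t := hs.trans hst
  have hMnn : 0 ≤ M := le_trans (norm_nonneg _) (hM astar le_rfl)
  refine le_of_forall_pos_le_add ?_
  intro ε hε
  set R : ℝ := max 1 (Real.log (L * (M + 1) / ε) / β) with hRdef
  set b : ℝ := t + R with hbdef
  have hR1 : (1:ℝ) ≤ R := le_max_left _ _
  have htb : t ≤ b := by rw [hbdef]; linarith
  have hkey : L * Real.exp (-β * R) * M ≤ ε := by
    have h1 : Real.log (L * (M + 1) / ε) ≤ β * R := by
      have := le_max_right 1 (Real.log (L * (M + 1) / ε) / β)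
      calc Real.log (L * (M + 1) / ε) = (Real.log (L * (M + 1) / ε) / β) * β := by
            field_simp
      _ ≤ R * β := mul_le_mul_of_nonneg_right ((le_max_right _ _)) hβ.le
      _ = β * R := mul_comm _ _
    have h2 : L * (M + 1) / ε ≤ Real.exp (β * R) := by
      calc L * (M + 1) / ε = Real.exp (Real.log (L * (M + 1) / ε)) := by
            rw [Real.exp_log (by positivity)]
      _ ≤ Real.exp (β * R) := Real.exp_le_exp.mpr h1
    have h3 : L * (M + 1) ≤ ε * Real.exp (β * R) := by
      rw [div_le_iff₀ hε] at h2; linarith [h2]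
    have h4 : Real.exp (-β * R) * Real.exp (β * R) = 1 := by
      rw [← Real.exp_add]; simp
    nlinarith [Real.exp_pos (β * R), Real.exp_pos (-β * R), hL]
  have hsubset : Set.Icc s b ⊆ Set.Ici astar := fun x hx => le_trans hs hx.1
  have hexpa := hexp (T t astar w) s t b hst htb hsubset
  rw [cocycle_apply hT (gt_a0 hastar hs) (gt_a0 hastar ht) (gt_a0 hastar le_rfl) w,
    cocycle_apply hT (gt_a0 hastar (hs.trans (hst.trans htb))) (gt_a0 hastar ht)
      (gt_a0 hastar le_rfl) w] at hexpa
  have hMb : ‖T b astar w‖ ≤ M := hM b (le_trans ht htb)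
  have hbt : b - t = R := by rw [hbdef]; ring
  rw [hbt] at hexpa
  have : L * Real.exp (-β * R) * ‖T b astar w‖ ≤ ε := by
    calc L * Real.exp (-β * R) * ‖T b astar w‖ ≤ L * Real.exp (-β * R) * M :=
      mul_le_mul_of_nonneg_left hMb (by positivity)
    _ ≤ ε := hkey
  calc ‖T t astar w‖ ≤ L * (Real.exp (-β * (t - s)) * ‖T s astar w‖ +
      Real.exp (-β * R) * ‖T b astar w‖) := hexpa
  _ = L * Real.exp (-β * (t - s)) * ‖T s astar w‖ +
      L * Real.exp (-β * R) * ‖T b astar w‖ := by ring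
  _ ≤ L * Real.exp (-β * (t - s)) * ‖T s astar w‖ + ε := by linarith

include hT hastar hL hβ hexp in
/-- Claim G : once growing relative to an earlier time, grows forever. -/
lemma claimG : ∀ (u : X) (aa t : ℝ), astar ≤ aa → aa ≤ t →
    2 * L * Real.exp (-β * (t - aa)) * ‖T aa astar u‖ ≤ ‖T t astar u‖ →
    ∀ b, t ≤ b → ‖T t astar u‖ ≤ 2 * L * Real.exp (-β * (b - t)) * ‖T b astar u‖ := by
  intro u aa t haa hat hgrw b htb
  have hsubset : Set.Icc aa b ⊆ Set.Ici astar := fun x hx => le_trans haa hx.1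
  have hexpa := hexp (T t astar u) aa t b hat htb hsubset
  rw [cocycle_apply hT (gt_a0 hastar haa) (gt_a0 hastar (haa.trans hat))
      (gt_a0 hastar le_rfl) u,
    cocycle_apply hT (gt_a0 hastar (haa.trans (hat.trans htb)))
      (gt_a0 hastar (haa.trans hat)) (gt_a0 hastar le_rfl) u] at hexpa
  nlinarith [hexpa, hgrw]

include hT hastar hL hβ hexp in
/-- Claim E : every unbounded solution has a growing time. -/
lemma claimE : ∀ u : X, u ∉ Ssub T astar → ∃ t, astar ≤ t ∧
    2 * L * Real.exp (-β * (t - astar)) * ‖u‖ ≤ ‖T t astar u‖ := by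
  intro u hu
  by_contra hcon
  push_neg at hcon
  apply hu
  rw [mem_Ssub]
  refine ⟨2 * L * ‖u‖, fun t ht => ?_⟩
  have h1 := hcon t ht
  have h2 : Real.exp (-β * (t - astar)) ≤ 1 := by
    rw [Real.exp_le_one_iff]; nlinarith
  have hid : ‖T astar astar u‖ = ‖u‖ := by rw [id_apply hT (gt_a0 hastar le_rfl)]
  have h3 : 2 * L * Real.exp (-β * (t - astar)) * ‖u‖ ≤ 2 * L * ‖u‖ := by
    have := mul_le_mul_of_nonneg_right
      (mul_le_mul_of_nonneg_left h2 (by positivity : (0:ℝ) ≤ 2 * L)) (norm_nonneg u)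
    calc 2 * L * Real.exp (-β * (t - astar)) * ‖u‖ = 2 * L * Real.exp (-β * (t - astar)) * ‖u‖ := rfl
    _ ≤ 2 * L * 1 * ‖u‖ := by nlinarith [norm_nonneg u]
    _ = 2 * L * ‖u‖ := by ring
  linarith

end ExpToDicho

section ExpToDicho2
variable (hT : IsInvertibleEvolutionFamily a₀ T) (hastar : a₀ < (astar : EReal))
  {L β K μ : ℝ} (hL : 0 < L) (hβ : 0 < β) (hK : 0 < K) (hμ : 0 < μ)
  (hexp : ∀ (v : X) (a t b : ℝ), a ≤ t → t ≤ b → Set.Icc a b ⊆ Set.Ici astar →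
      ‖v‖ ≤ L * (Real.exp (-β * (t - a)) * ‖T a t v‖ +
        Real.exp (-β * (b - t)) * ‖T b t v‖))
  (hgrow : ∀ t s : ℝ, astar ≤ s → s ≤ t → ‖T t s‖ ≤ K * Real.exp (μ * (t - s)))
  (hdec : ∀ t s : ℝ, astar ≤ t → t ≤ s → ‖T t s‖ ≤ K * Real.exp (μ * (s - t)))

include hT hastar hL hβ hK hμ hexp hgrow hdec in
lemma claimBlocal : ∀ u₀ : X, ‖u₀‖ = 1 → u₀ ∉ Ssub T astar →
    ∃ r : ℝ, 0 < r ∧ ∃ cc : ℝ, 0 < cc ∧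
      ∀ u : X, ‖u - u₀‖ < r → ∀ t, astar ≤ t →
        ‖u‖ ≤ cc * Real.exp (-β * (t - astar)) * ‖T t astar u‖ := by
  intro u₀ hu₀norm hu₀
  obtain ⟨t₀, ht₀, hgrw₀⟩ := claimE hT hastar hL hβ hexp u₀ hu₀
  set ρ : ℝ := max 0 (Real.log (8 * L)) with hρdef
  have hρ : 0 ≤ ρ := le_max_left _ _
  set t₁ : ℝ := t₀ + (t₀ - astar) + ρ / β with ht₁def
  have ht₀t₁ : t₀ ≤ t₁ := by
    rw [ht₁def]
    have : 0 ≤ ρ / β := div_nonneg hρ hβ.le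
    linarith
  have ht₁star : astar ≤ t₁ := ht₀.trans ht₀t₁
  -- 8L ≤ ‖T t₁ astar u₀‖
  have hgrw₀' : 2 * L * Real.exp (-β * (t₀ - astar)) * ‖T astar astar u₀‖ ≤ ‖T t₀ astar u₀‖ := by
    rw [id_apply hT (gt_a0 hastar le_rfl)]
    exact hgrw₀
  have hGres := claimG hT hastar hL hβ hexp u₀ astar t₀ le_rfl ht₀ hgrw₀' t₁ ht₀t₁
  have hexpρ : Real.exp (-β * (t₀ - astar)) = Real.exp (-β * (t₁ - t₀)) * Real.exp ρ := by
    rw [← Real.exp_add]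
    congr 1
    rw [ht₁def]
    field_simp
    ring
  have h8 : 8 * L ≤ ‖T t₁ astar u₀‖ := by
    have hexpρ8 : 8 * L ≤ Real.exp ρ := by
      calc 8 * L = Real.exp (Real.log (8 * L)) := by rw [Real.exp_log (by positivity)]
      _ ≤ Real.exp ρ := Real.exp_le_exp.mpr (le_max_right _ _)
    have hchain : 2 * L * Real.exp (-β * (t₁ - t₀)) * Real.exp ρ ≤
        2 * L * Real.exp (-β * (t₁ - t₀)) * ‖T t₁ astar u₀‖ := by
      calc 2 * L * Real.exp (-β * (t₁ - t₀)) * Real.exp ρ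
          = 2 * L * Real.exp (-β * (t₀ - astar)) * ‖u₀‖ := by rw [hexpρ, hu₀norm]; ring
      _ ≤ ‖T t₀ astar u₀‖ := hgrw₀
      _ ≤ 2 * L * Real.exp (-β * (t₁ - t₀)) * ‖T t₁ astar u₀‖ := hGres
    have := le_of_mul_le_mul_left
      (by calc (2 * L * Real.exp (-β * (t₁ - t₀))) * Real.exp ρ
            = 2 * L * Real.exp (-β * (t₁ - t₀)) * Real.exp ρ := by ring
        _ ≤ 2 * L * Real.exp (-β * (t₁ - t₀)) * ‖T t₁ astar u₀‖ := hchain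
        _ = (2 * L * Real.exp (-β * (t₁ - t₀))) * ‖T t₁ astar u₀‖ := by ring)
      (by positivity : (0:ℝ) < 2 * L * Real.exp (-β * (t₁ - t₀)))
    linarith
  set r : ℝ := min 1 (4 * L / (K * Real.exp (μ * (t₁ - astar)))) with hrdef
  have hrpos : 0 < r := lt_min (by norm_num) (by positivity)
  have hr1 : r ≤ 1 := min_le_left _ _
  set cc : ℝ := max (Real.exp (2 * β * (t₁ - astar))) (K * Real.exp ((μ + β) * (t₁ - astar)))
    with hccdef
  have hccpos : 0 < cc := lt_of_lt_of_le (Real.exp_pos _) (le_max_left _ _)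
  refine ⟨r, hrpos, cc, hccpos, ?_⟩
  intro u hur t ht
  have hu2 : ‖u‖ ≤ 2 := by
    calc ‖u‖ = ‖u₀ + (u - u₀)‖ := by congr 1; abel
    _ ≤ ‖u₀‖ + ‖u - u₀‖ := norm_add_le _ _
    _ ≤ 1 + 1 := add_le_add hu₀norm.le (hur.le.trans hr1)
    _ = 2 := by norm_num
  have hdiff : ‖T t₁ astar (u₀ - u)‖ ≤ 4 * L := by
    have h1 : ‖T t₁ astar (u₀ - u)‖ ≤ ‖T t₁ astar‖ * ‖u₀ - u‖ :=
      ContinuousLinearMap.le_opNorm _ _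
    have h2 : ‖T t₁ astar‖ ≤ K * Real.exp (μ * (t₁ - astar)) := hgrow t₁ astar le_rfl ht₁star
    have h3 : ‖u₀ - u‖ ≤ 4 * L / (K * Real.exp (μ * (t₁ - astar))) := by
      rw [norm_sub_rev]
      exact hur.le.trans (min_le_right _ _)
    calc ‖T t₁ astar (u₀ - u)‖ ≤ ‖T t₁ astar‖ * ‖u₀ - u‖ := h1
    _ ≤ (K * Real.exp (μ * (t₁ - astar))) * (4 * L / (K * Real.exp (μ * (t₁ - astar)))) := by
        apply mul_le_mul h2 h3 (norm_nonneg _) (by positivity)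
    _ = 4 * L := by field_simp
  have huft₁ : 4 * L ≤ ‖T t₁ astar u‖ := by
    have := norm_sub_norm_le (T t₁ astar u₀) (T t₁ astar u)
    rw [← map_sub] at this
    linarith
  have hgrwu : 2 * L * Real.exp (-β * (t₁ - astar)) * ‖T astar astar u‖ ≤ ‖T t₁ astar u‖ := by
    rw [id_apply hT (gt_a0 hastar le_rfl)]
    have hexple : Real.exp (-β * (t₁ - astar)) ≤ 1 := by
      rw [Real.exp_le_one_iff]; nlinarith
    have : 2 * L * Real.exp (-β * (t₁ - astar)) * ‖u‖ ≤ 2 * L * 1 * 2 := by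
      have e1 : Real.exp (-β * (t₁ - astar)) * ‖u‖ ≤ 1 * 2 :=
        mul_le_mul hexple hu2 (norm_nonneg u) one_pos.le
      calc 2 * L * Real.exp (-β * (t₁ - astar)) * ‖u‖
          = 2 * L * (Real.exp (-β * (t₁ - astar)) * ‖u‖) := by ring
      _ ≤ 2 * L * (1 * 2) := mul_le_mul_of_nonneg_left e1 (by positivity)
      _ = 2 * L * 1 * 2 := by ring
    linarith
  rcases le_or_gt t₁ t with hct | hct
  · -- t ≥ t₁ : use claim G
    have hGres2 := claimG hT hastar hL hβ hexp u astar t₁ le_rfl ht₁star hgrwu t hct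
    have hkey : Real.exp (-β * (t - t₁)) =
        Real.exp (-β * (t₁ - astar)) *
          (Real.exp (2 * β * (t₁ - astar)) * Real.exp (-β * (t - astar))) := by
      rw [← Real.exp_add, ← Real.exp_add]
      congr 1
      ring
    have hchain : (2 * L * Real.exp (-β * (t₁ - astar))) * ‖u‖ ≤
        (2 * L * Real.exp (-β * (t₁ - astar))) *
          (cc * Real.exp (-β * (t - astar)) * ‖T t astar u‖) := by
      have hstep1 : 2 * L * Real.exp (-β * (t₁ - astar)) * ‖u‖ ≤ ‖T t₁ astar u‖ := by
        rw [id_apply hT (gt_a0 hastar le_rfl)] at hgrwu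
        exact hgrwu
      have hstep2 : ‖T t₁ astar u‖ ≤ 2 * L * Real.exp (-β * (t - t₁)) * ‖T t astar u‖ := hGres2
      have hstep3 : 2 * L * Real.exp (-β * (t - t₁)) * ‖T t astar u‖ ≤
          (2 * L * Real.exp (-β * (t₁ - astar))) *
            (cc * Real.exp (-β * (t - astar)) * ‖T t astar u‖) := by
        rw [hkey]
        have hle : Real.exp (2 * β * (t₁ - astar)) ≤ cc := le_max_left _ _
        have hfac : (0:ℝ) ≤ 2 * L * Real.exp (-β * (t₁ - astar)) *
            (Real.exp (-β * (t - astar)) * ‖T t astar u‖) := by positivity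
        nlinarith [mul_le_mul_of_nonneg_right hle hfac]
      linarith
    exact le_of_mul_le_mul_left hchain (by positivity)
  · -- t < t₁ : crude bound
    have hid : T astar t (T t astar u) = u := by
      rw [cocycle_apply hT (gt_a0 hastar le_rfl) (gt_a0 hastar ht) (gt_a0 hastar le_rfl) u,
        id_apply hT (gt_a0 hastar le_rfl)]
    have hb1 : ‖u‖ ≤ K * Real.exp (μ * (t - astar)) * ‖T t astar u‖ := by
      calc ‖u‖ = ‖T astar t (T t astar u)‖ := by rw [hid]
      _ ≤ ‖T astar t‖ * ‖T t astar u‖ := ContinuousLinearMap.le_opNorm _ _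
      _ ≤ K * Real.exp (μ * (t - astar)) * ‖T t astar u‖ :=
          mul_le_mul_of_nonneg_right (hdec astar t le_rfl ht) (norm_nonneg _)
    have hb2 : K * Real.exp (μ * (t - astar)) ≤ cc * Real.exp (-β * (t - astar)) := by
      have h1 : K * Real.exp (μ * (t - astar)) ≤
          (K * Real.exp ((μ + β) * (t₁ - astar))) * Real.exp (-β * (t - astar)) := by
        rw [mul_assoc, ← Real.exp_add]
        apply mul_le_mul_of_nonneg_left _ hK.le
        apply Real.exp_le_exp.mpr
        nlinarith
      refine h1.trans ?_
      exact mul_le_mul_of_nonneg_right (le_max_right _ _) (Real.exp_pos _).le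
    exact hb1.trans (mul_le_mul_of_nonneg_right hb2 (norm_nonneg _))

end ExpToDicho2

section ExpToDicho3
variable (hT : IsInvertibleEvolutionFamily a₀ T) (hastar : a₀ < (astar : EReal))
  {L β K μ : ℝ} (hL : 0 < L) (hβ : 0 < β) (hK : 0 < K) (hμ : 0 < μ)
  (hexp : ∀ (v : X) (a t b : ℝ), a ≤ t → t ≤ b → Set.Icc a b ⊆ Set.Ici astar →
      ‖v‖ ≤ L * (Real.exp (-β * (t - a)) * ‖T a t v‖ +
        Real.exp (-β * (b - t)) * ‖T b t v‖))
  (hgrow : ∀ t s : ℝ, astar ≤ s → s ≤ t → ‖T t s‖ ≤ K * Real.exp (μ * (t - s)))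
  (hdec : ∀ t s : ℝ, astar ≤ t → t ≤ s → ‖T t s‖ ≤ K * Real.exp (μ * (s - t)))

include hT hastar hL hβ hK hμ hexp hgrow hdec in
lemma claimB [FiniteDimensional ℝ X] (U : Submodule ℝ X) (hcompl : IsCompl (Ssub T astar) U) :
    ∃ c : ℝ, 0 < c ∧ ∀ u ∈ U, ∀ t, astar ≤ t →
      ‖u‖ ≤ c * Real.exp (-β * (t - astar)) * ‖T t astar u‖ := by
  haveI : ProperSpace X := FiniteDimensional.proper ℝ X
  set Ksph : Set X := (U : Set X) ∩ Metric.sphere 0 1 with hKsphdef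
  have hKcl : IsClosed Ksph :=
    (Submodule.closed_of_finiteDimensional U).inter Metric.isClosed_sphere
  have hKbd : Bornology.IsBounded Ksph :=
    (Metric.isBounded_sphere).subset Set.inter_subset_right
  have hKcmp : IsCompact Ksph := Metric.isCompact_of_isClosed_isBounded hKcl hKbd
  have hloc : ∀ u₀ ∈ Ksph, ∃ r, 0 < r ∧ ∃ cc, 0 < cc ∧
      ∀ u : X, ‖u - u₀‖ < r → ∀ t, astar ≤ t →
        ‖u‖ ≤ cc * Real.exp (-β * (t - astar)) * ‖T t astar u‖ := by
    intro u₀ hu₀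
    have hn : ‖u₀‖ = 1 := by simpa using mem_sphere_zero_iff_norm.mp hu₀.2
    have hne : u₀ ∉ Ssub T astar := by
      intro hmem
      have h0 : u₀ = 0 := (Submodule.disjoint_def.mp hcompl.disjoint) u₀ hmem hu₀.1
      rw [h0] at hn; simp at hn
    exact claimBlocal hT hastar hL hβ hK hμ hexp hgrow hdec u₀ hn hne
  choose! rfn hrfn ccfn hccfn hfn using hloc
  have hcover : Ksph ⊆ ⋃ u₀ ∈ Ksph, Metric.ball u₀ (rfn u₀) := by
    intro x hx
    exact Set.mem_biUnion hx (Metric.mem_ball_self (hrfn x hx))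
  obtain ⟨F, hFsub, hFfin, hFcover⟩ := hKcmp.elim_finite_subcover_image
    (fun u₀ _ => Metric.isOpen_ball) hcover
  obtain ⟨cb, hcb⟩ := (hFfin.image ccfn).bddAbove
  refine ⟨max 1 cb, lt_of_lt_of_le one_pos (le_max_left _ _), ?_⟩
  intro u hu t ht
  rcases eq_or_ne u 0 with rfl | hu0
  · simp
  have hnormpos : 0 < ‖u‖ := norm_pos_iff.mpr hu0
  set u' : X := ‖u‖⁻¹ • u with hu'def
  have hu'U : u' ∈ U := U.smul_mem _ hu
  have hu'n : ‖u'‖ = 1 := by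
    rw [hu'def, norm_smul, norm_inv, norm_norm]
    field_simp
  have hu'K : u' ∈ Ksph := ⟨hu'U, by simpa [mem_sphere_zero_iff_norm] using hu'n⟩
  obtain ⟨u₀, hu₀F, hu'ball⟩ := Set.mem_iUnion₂.mp (hFcover hu'K)
  have hu₀K : u₀ ∈ Ksph := hFsub hu₀F
  have h := hfn u₀ hu₀K u' (by simpa [Metric.mem_ball, dist_eq_norm] using hu'ball) t ht
  have hccle : ccfn u₀ ≤ max 1 cb :=
    le_trans (hcb (Set.mem_image_of_mem ccfn hu₀F)) (le_max_right _ _)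
  have hTu' : ‖T t astar u'‖ = ‖u‖⁻¹ * ‖T t astar u‖ := by
    rw [hu'def, map_smul, norm_smul, norm_inv, norm_norm]
  rw [hu'n, hTu'] at h
  have h2 : ‖u‖ ≤ ccfn u₀ * Real.exp (-β * (t - astar)) * ‖T t astar u‖ := by
    have h3 := mul_le_mul_of_nonneg_left h hnormpos.le
    calc ‖u‖ = ‖u‖ * 1 := (mul_one _).symm
    _ ≤ ‖u‖ * (ccfn u₀ * Real.exp (-β * (t - astar)) * (‖u‖⁻¹ * ‖T t astar u‖)) := h3
    _ = (‖u‖ * ‖u‖⁻¹) * (ccfn u₀ * Real.exp (-β * (t - astar)) * ‖T t astar u‖) := by ring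
    _ = ccfn u₀ * Real.exp (-β * (t - astar)) * ‖T t astar u‖ := by
        rw [mul_inv_cancel₀ hnormpos.ne', one_mul]
  refine h2.trans ?_
  apply mul_le_mul_of_nonneg_right _ (norm_nonneg _)
  exact mul_le_mul_of_nonneg_right hccle (Real.exp_pos _).le

end ExpToDicho3

lemma exp_to_dicho [FiniteDimensional ℝ X]
    (hT : IsInvertibleEvolutionFamily a₀ T) (hastar : a₀ < (astar : EReal))
    (hgrowth : BoundedGrowthOn T (Set.Ici astar))
    (hdecay : BoundedDecayOn T (Set.Ici astar)) :
    ExpExpansiveOn T (Set.Ici astar) → ExpDichotomyOn T (Set.Ici astar) := by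
  rintro ⟨L, hL, β, hβ, hexp⟩
  obtain ⟨K₁, hK₁, μ₁, hμ₁, hg₁⟩ := hgrowth
  obtain ⟨K₂, hK₂, μ₂, hμ₂, hd₂⟩ := hdecay
  set K : ℝ := max K₁ K₂ with hKdef
  set μ : ℝ := max μ₁ μ₂ with hμdef
  have hK : 0 < K := lt_of_lt_of_le hK₁ (le_max_left _ _)
  have hμ : 0 < μ := lt_of_lt_of_le hμ₁ (le_max_left _ _)
  have hgrow : ∀ t s : ℝ, astar ≤ s → s ≤ t → ‖T t s‖ ≤ K * Real.exp (μ * (t - s)) := by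
    intro t s hs hst
    refine (hg₁ t (hs.trans hst) s hs hst).trans ?_
    have : Real.exp (μ₁ * (t - s)) ≤ Real.exp (μ * (t - s)) :=
      Real.exp_le_exp.mpr (mul_le_mul_of_nonneg_right (le_max_left _ _) (by linarith))
    exact mul_le_mul (le_max_left _ _) this (Real.exp_pos _).le hK.le
  have hdec : ∀ t s : ℝ, astar ≤ t → t ≤ s → ‖T t s‖ ≤ K * Real.exp (μ * (s - t)) := by
    intro t s ht hts
    refine (hd₂ t ht s (ht.trans hts) hts).trans ?_
    have : Real.exp (μ₂ * (s - t)) ≤ Real.exp (μ * (s - t)) :=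
      Real.exp_le_exp.mpr (mul_le_mul_of_nonneg_right (le_max_right _ _) (by linarith))
    exact mul_le_mul (le_max_right _ _) this (Real.exp_pos _).le hK.le
  -- complement of the stable space
  obtain ⟨U, hcompl⟩ := Submodule.exists_isCompl (Ssub T astar)
  obtain ⟨c, hc, hB⟩ := claimB hT hastar hL hβ hK hμ hexp hgrow hdec U hcompl
  set c₂ : ℝ := L * (c + 1) with hc₂def
  have hc₂ : 0 < c₂ := by positivity
  -- claim U : backward decay on the unstable fibers
  have claimU : ∀ u ∈ U, ∀ τ t : ℝ, astar ≤ τ → τ ≤ t →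
      ‖T τ astar u‖ ≤ c₂ * Real.exp (-β * (t - τ)) * ‖T t astar u‖ := by
    intro u hu τ t hτ hτt
    have hexpa := hexp (T τ astar u) astar τ t hτ hτt (fun x hx => hx.1)
    rw [cocycle_apply hT (gt_a0 hastar le_rfl) (gt_a0 hastar hτ) (gt_a0 hastar le_rfl) u,
      id_apply hT (gt_a0 hastar le_rfl) u,
      cocycle_apply hT (gt_a0 hastar (hτ.trans hτt)) (gt_a0 hastar hτ)
        (gt_a0 hastar le_rfl) u] at hexpa
    have hBu := hB u hu t (hτ.trans hτt)
    have hprod : Real.exp (-β * (τ - astar)) * Real.exp (-β * (t - astar)) ≤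
        Real.exp (-β * (t - τ)) := by
      rw [← Real.exp_add]
      apply Real.exp_le_exp.mpr
      nlinarith
    have hstep : Real.exp (-β * (τ - astar)) * ‖u‖ ≤
        c * Real.exp (-β * (t - τ)) * ‖T t astar u‖ := by
      calc Real.exp (-β * (τ - astar)) * ‖u‖
          ≤ Real.exp (-β * (τ - astar)) * (c * Real.exp (-β * (t - astar)) * ‖T t astar u‖) :=
            mul_le_mul_of_nonneg_left hBu (Real.exp_pos _).le
      _ = c * (Real.exp (-β * (τ - astar)) * Real.exp (-β * (t - astar))) * ‖T t astar u‖ := by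
            ring
      _ ≤ c * Real.exp (-β * (t - τ)) * ‖T t astar u‖ := by
            have := mul_le_mul_of_nonneg_right hprod
              (show (0:ℝ) ≤ c * ‖T t astar u‖ by positivity)
            nlinarith [this]
    calc ‖T τ astar u‖ ≤ L * (Real.exp (-β * (τ - astar)) * ‖u‖ +
          Real.exp (-β * (t - τ)) * ‖T t astar u‖) := hexpa
    _ ≤ L * (c * Real.exp (-β * (t - τ)) * ‖T t astar u‖ +
          Real.exp (-β * (t - τ)) * ‖T t astar u‖) := by
        apply mul_le_mul_of_nonneg_left _ hL.le
        linarith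
    _ = c₂ * Real.exp (-β * (t - τ)) * ‖T t astar u‖ := by rw [hc₂def]; ring
  -- the projection at time astar
  set P₀ : X →L[ℝ] X := LinearMap.toContinuousLinearMap
    (((Ssub T astar).subtype).comp ((Ssub T astar).linearProjOfIsCompl U hcompl)) with hP₀def
  have hP₀apply : ∀ x : X, P₀ x = ((Ssub T astar).linearProjOfIsCompl U hcompl x : X) :=
    fun x => rfl
  have hP₀mem : ∀ x, P₀ x ∈ Ssub T astar := fun x => by
    rw [hP₀apply]; exact Submodule.coe_mem _
  have hP₀S : ∀ x, x ∈ Ssub T astar → P₀ x = x := by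
    intro x hx
    have h1 : (Ssub T astar).linearProjOfIsCompl U hcompl x = ⟨x, hx⟩ :=
      Submodule.linearProjOfIsCompl_apply_left hcompl ⟨x, hx⟩
    rw [hP₀apply, h1]
  have hP₀U : ∀ x, x ∈ U → P₀ x = 0 := by
    intro x hx
    have h1 : (Ssub T astar).linearProjOfIsCompl U hcompl x = 0 :=
      Submodule.linearProjOfIsCompl_apply_right hcompl ⟨x, hx⟩
    rw [hP₀apply, h1]; rfl
  have hsubU : ∀ x : X, x - P₀ x ∈ U := by
    intro x
    have hxmem : x ∈ (Ssub T astar) ⊔ U := by rw [hcompl.sup_eq_top]; trivial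
    obtain ⟨y, hy, z, hz, hyz⟩ := Submodule.mem_sup.mp hxmem
    have hPx : P₀ x = y := by
      rw [← hyz, map_add, hP₀S y hy, hP₀U z hz, add_zero]
    rw [hPx, ← hyz]
    simpa [add_sub_cancel_left] using hz
  -- the projections
  set Pt : ℝ → X →L[ℝ] X := fun t => (T t astar).comp (P₀.comp (T astar t)) with hPtdef
  have hPtapply : ∀ t v, Pt t v = T t astar (P₀ (T astar t v)) := fun _ _ => rfl
  have hPtcomm : ∀ t s : ℝ, astar ≤ t → astar ≤ s → ∀ v,
      Pt t (T t s v) = T t s (Pt s v) := by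
    intro t s ht hs v
    rw [hPtapply, hPtapply,
      cocycle_apply hT (gt_a0 hastar le_rfl) (gt_a0 hastar ht) (gt_a0 hastar hs),
      cocycle_apply hT (gt_a0 hastar ht) (gt_a0 hastar hs) (gt_a0 hastar le_rfl)]
  -- claim P : uniform bound on the complementary part
  set Δ : ℝ := max 1 (Real.log (2 * c₂ * L) / (2 * β)) with hΔdef
  have hΔ1 : (1:ℝ) ≤ Δ := le_max_left _ _
  have hΔpos : 0 < Δ := lt_of_lt_of_le one_pos hΔ1
  have hΔkey : 2 * c₂ * L ≤ Real.exp (2 * β * Δ) := by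
    calc 2 * c₂ * L = Real.exp (Real.log (2 * c₂ * L)) := by
          rw [Real.exp_log (by positivity)]
    _ ≤ Real.exp (2 * β * Δ) := by
        apply Real.exp_le_exp.mpr
        have h1 : Real.log (2 * c₂ * L) / (2 * β) ≤ Δ := le_max_right _ _
        calc Real.log (2 * c₂ * L) = (Real.log (2 * c₂ * L) / (2 * β)) * (2 * β) := by
              field_simp
        _ ≤ Δ * (2 * β) := mul_le_mul_of_nonneg_right h1 (by positivity)
        _ = 2 * β * Δ := by ring
  set e : ℝ := Real.exp (-β * Δ) with hedef
  have he0 : 0 < e := Real.exp_pos _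
  have he1 : e ≤ 1 := by
    rw [hedef, Real.exp_le_one_iff]
    nlinarith
  have hee : c₂ * L * (e * e) ≤ 1 / 2 := by
    have h1 : e * e = Real.exp (-(2 * β * Δ)) := by
      rw [hedef, ← Real.exp_add]; congr 1; ring
    have h2 : Real.exp (-(2 * β * Δ)) * Real.exp (2 * β * Δ) = 1 := by
      rw [← Real.exp_add]; simp
    nlinarith [Real.exp_pos (-(2 * β * Δ)), Real.exp_pos (2 * β * Δ),
      mul_le_mul_of_nonneg_right hΔkey (Real.exp_pos (-(2 * β * Δ))).le]
  set Cp : ℝ := 2 * c₂ * (K * Real.exp (μ * Δ) + L) with hCpdef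
  have hCp : 0 < Cp := by positivity
  have claimP : ∀ t, astar ≤ t → ∀ v : X, ‖v - Pt t v‖ ≤ Cp * ‖v‖ := by
    intro t ht v
    set w : X := T astar t v with hwdef
    have hvw : T t astar w = v := by
      rw [hwdef, cocycle_apply hT (gt_a0 hastar ht) (gt_a0 hastar le_rfl) (gt_a0 hastar ht),
        id_apply hT (gt_a0 hastar ht)]
    have hvmP : v - Pt t v = T t astar (w - P₀ w) := by
      rw [map_sub, hvw, hPtapply]
    set b : ℝ := t + Δ with hbdef
    have htb : t ≤ b := by rw [hbdef]; linarith
    have hbstar : astar ≤ b := ht.trans htb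
    have hbt : b - t = Δ := by rw [hbdef]; ring
    set N : ℝ := ‖v - Pt t v‖ with hNdef
    have hNnn : 0 ≤ N := norm_nonneg _
    -- h1 : N ≤ c₂ e ‖T b astar (w - P₀ w)‖
    have h1 : N ≤ c₂ * e * ‖T b astar (w - P₀ w)‖ := by
      have := claimU (w - P₀ w) (hsubU w) t b ht htb
      rw [← hvmP, hbt] at this
      rw [hNdef, hedef]
      linarith [this]
    -- h3 : ‖T b astar w‖ ≤ K exp(μΔ) ‖v‖
    have h3 : ‖T b astar w‖ ≤ K * Real.exp (μ * Δ) * ‖v‖ := by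
      have hco : T b astar w = T b t v := by
        rw [hwdef, cocycle_apply hT (gt_a0 hastar hbstar) (gt_a0 hastar le_rfl)
          (gt_a0 hastar ht)]
      rw [hco]
      calc ‖T b t v‖ ≤ ‖T b t‖ * ‖v‖ := ContinuousLinearMap.le_opNorm _ _
      _ ≤ K * Real.exp (μ * (b - t)) * ‖v‖ :=
          mul_le_mul_of_nonneg_right (hgrow b t ht htb) (norm_nonneg _)
      _ = K * Real.exp (μ * Δ) * ‖v‖ := by rw [hbt]
    -- h4 : ‖T b astar (P₀ w)‖ ≤ L e (‖v‖ + N)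
    have h4 : ‖T b astar (P₀ w)‖ ≤ L * e * (‖v‖ + N) := by
      have hA := claimA hT hastar hL hβ hexp (P₀ w) (hP₀mem w) t b ht htb
      have hPt : ‖T t astar (P₀ w)‖ ≤ ‖v‖ + N := by
        have : T t astar (P₀ w) = Pt t v := (hPtapply t v).symm
        rw [this]
        have : Pt t v = v - (v - Pt t v) := by abel
        rw [this]
        calc ‖v - (v - Pt t v)‖ ≤ ‖v‖ + ‖v - Pt t v‖ := norm_sub_le _ _
        _ = ‖v‖ + N := rfl
      calc ‖T b astar (P₀ w)‖ ≤ L * Real.exp (-β * (b - t)) * ‖T t astar (P₀ w)‖ := hA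
      _ = L * e * ‖T t astar (P₀ w)‖ := by rw [hbt, hedef]
      _ ≤ L * e * (‖v‖ + N) := mul_le_mul_of_nonneg_left hPt (by positivity)
    -- combine
    have h2 : ‖T b astar (w - P₀ w)‖ ≤ K * Real.exp (μ * Δ) * ‖v‖ + L * e * (‖v‖ + N) := by
      calc ‖T b astar (w - P₀ w)‖ = ‖T b astar w - T b astar (P₀ w)‖ := by rw [map_sub]
      _ ≤ ‖T b astar w‖ + ‖T b astar (P₀ w)‖ := norm_sub_le _ _
      _ ≤ K * Real.exp (μ * Δ) * ‖v‖ + L * e * (‖v‖ + N) := add_le_add h3 h4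
    have h5 : N ≤ c₂ * e * (K * Real.exp (μ * Δ) * ‖v‖ + L * e * (‖v‖ + N)) :=
      h1.trans (mul_le_mul_of_nonneg_left h2 (by positivity))
    have h6 : c₂ * L * (e * e) * N ≤ (1 / 2) * N := mul_le_mul_of_nonneg_right hee hNnn
    have h7 : e * (c₂ * (K * Real.exp (μ * Δ)) * ‖v‖) ≤ c₂ * (K * Real.exp (μ * Δ)) * ‖v‖ :=
      mul_le_of_le_one_left (by positivity) he1
    have h8 : (e * e) * (c₂ * L * ‖v‖) ≤ c₂ * L * ‖v‖ := by
      have : e * e ≤ 1 := by nlinarith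
      exact mul_le_of_le_one_left (by positivity) this
    rw [hCpdef]
    nlinarith [h5, h6, h7, h8]
  -- dichotomy constants
  set D : ℝ := L * (1 + Cp) + c₂ * Cp + 1 with hDdef
  have hD : 0 < D := by positivity
  refine ⟨Pt, D, β, hD, hβ, ?_, ?_, ?_, ?_, ?_⟩
  · -- idempotent
    intro t ht
    ext v
    simp only [ContinuousLinearMap.comp_apply]
    rw [hPtapply, hPtapply,
      cocycle_apply hT (gt_a0 hastar le_rfl) (gt_a0 hastar ht) (gt_a0 hastar le_rfl),
      id_apply hT (gt_a0 hastar le_rfl), hP₀S _ (hP₀mem _)]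
  · -- commutation
    intro t ht s hs hst
    ext v
    simp only [ContinuousLinearMap.comp_apply]
    exact hPtcomm t s ht hs v
  · -- bijectivity on kernels
    intro t ht s hs hst
    refine ⟨?_, ?_, ?_⟩
    · intro x hx
      have hx0 : Pt s x = 0 := hx
      have : Pt t (T t s x) = 0 := by rw [hPtcomm t s ht hs x, hx0, map_zero]
      exact this
    · intro x hx y hy hxy
      have := congrArg (T s t) hxy
      rwa [cocycle_apply hT (gt_a0 hastar hs) (gt_a0 hastar ht) (gt_a0 hastar hs),
        id_apply hT (gt_a0 hastar hs),
        cocycle_apply hT (gt_a0 hastar hs) (gt_a0 hastar ht) (gt_a0 hastar hs),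
        id_apply hT (gt_a0 hastar hs)] at this
    · intro x hx
      refine ⟨T s t x, ?_, ?_⟩
      · have hx0 : Pt t x = 0 := hx
        have : Pt s (T s t x) = 0 := by rw [hPtcomm s t hs ht x, hx0, map_zero]
        exact this
      · rw [cocycle_apply hT (gt_a0 hastar ht) (gt_a0 hastar hs) (gt_a0 hastar ht),
          id_apply hT (gt_a0 hastar ht)]
  · -- stable estimate
    intro t ht s hs hst
    apply ContinuousLinearMap.opNorm_le_bound _ (by positivity)
    intro v
    simp only [ContinuousLinearMap.comp_apply]
    have hco : T t s (Pt s v) = T t astar (P₀ (T astar s v)) := by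
      rw [hPtapply, cocycle_apply hT (gt_a0 hastar ht) (gt_a0 hastar hs)
        (gt_a0 hastar le_rfl)]
    rw [hco]
    have hA := claimA hT hastar hL hβ hexp (P₀ (T astar s v)) (hP₀mem _) s t hs hst
    have hPsv : ‖T s astar (P₀ (T astar s v))‖ ≤ (1 + Cp) * ‖v‖ := by
      have h1 : T s astar (P₀ (T astar s v)) = Pt s v := (hPtapply s v).symm
      rw [h1]
      have h2 : Pt s v = v - (v - Pt s v) := by abel
      rw [h2]
      calc ‖v - (v - Pt s v)‖ ≤ ‖v‖ + ‖v - Pt s v‖ := norm_sub_le _ _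
      _ ≤ ‖v‖ + Cp * ‖v‖ := by linarith [claimP s hs v]
      _ = (1 + Cp) * ‖v‖ := by ring
    calc ‖T t astar (P₀ (T astar s v))‖
        ≤ L * Real.exp (-β * (t - s)) * ‖T s astar (P₀ (T astar s v))‖ := hA
    _ ≤ L * Real.exp (-β * (t - s)) * ((1 + Cp) * ‖v‖) :=
        mul_le_mul_of_nonneg_left hPsv (by positivity)
    _ ≤ D * Real.exp (-β * (t - s)) * ‖v‖ := by
        rw [hDdef]
        have hEV : (0:ℝ) ≤ Real.exp (-β * (t - s)) * ‖v‖ := by positivity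
        have hcoef : L * (1 + Cp) ≤ L * (1 + Cp) + c₂ * Cp + 1 := by nlinarith
        nlinarith [mul_le_mul_of_nonneg_right hcoef hEV]
  · -- unstable estimate
    intro t ht s hs hts
    apply ContinuousLinearMap.opNorm_le_bound _ (by positivity)
    intro v
    simp only [ContinuousLinearMap.comp_apply, ContinuousLinearMap.sub_apply,
      ContinuousLinearMap.id_apply]
    set u₀ : X := T astar s v - P₀ (T astar s v) with hu₀def
    have hu₀U : u₀ ∈ U := hsubU _
    have hvP : v - Pt s v = T s astar u₀ := by
      rw [hu₀def, map_sub, hPtapply,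
        cocycle_apply hT (gt_a0 hastar hs) (gt_a0 hastar le_rfl) (gt_a0 hastar hs),
        id_apply hT (gt_a0 hastar hs)]
    have hco : T t s (v - Pt s v) = T t astar u₀ := by
      rw [hvP, cocycle_apply hT (gt_a0 hastar ht) (gt_a0 hastar hs) (gt_a0 hastar le_rfl)]
    rw [hco]
    have hU := claimU u₀ hu₀U t s ht hts
    calc ‖T t astar u₀‖ ≤ c₂ * Real.exp (-β * (s - t)) * ‖T s astar u₀‖ := hU
    _ = c₂ * Real.exp (-β * (s - t)) * ‖v - Pt s v‖ := by rw [hvP]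
    _ ≤ c₂ * Real.exp (-β * (s - t)) * (Cp * ‖v‖) :=
        mul_le_mul_of_nonneg_left (claimP s hs v) (by positivity)
    _ ≤ D * Real.exp (-β * (s - t)) * ‖v‖ := by
        rw [hDdef]
        have hEV : (0:ℝ) ≤ Real.exp (-β * (s - t)) * ‖v‖ := by positivity
        have hcoef : c₂ * Cp ≤ L * (1 + Cp) + c₂ * Cp + 1 := by nlinarith
        nlinarith [mul_le_mul_of_nonneg_right hcoef hEV]


end EvolAux

/-- Let `X` be a finite-dimensional Banach space and `T` an invertible
evolution family with bounded growth and bounded decay on `[a₀*, ∞)`. Then the following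
are equivalent: (a) `T` admits an exponential dichotomy on `[a₀*, ∞)`; (b) `T` is
exponentially expansive on `[a₀*, ∞)`; (c) `T` is uniformly noncritical on `[a₀*, ∞)`. -/
theorem expDichotomy_iff_expExpansive_iff_unifNoncritical_finiteDim
    [FiniteDimensional ℝ X]
    (a₀ : EReal) (T : ℝ → ℝ → X →L[ℝ] X) (astar : ℝ)
    (hT : IsInvertibleEvolutionFamily a₀ T)
    (hastar : a₀ < (astar : EReal))
    (hgrowth : BoundedGrowthOn T (Set.Ici astar))
    (hdecay : BoundedDecayOn T (Set.Ici astar)) :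
    (ExpDichotomyOn T (Set.Ici astar) ↔ ExpExpansiveOn T (Set.Ici astar)) ∧
    (ExpExpansiveOn T (Set.Ici astar) ↔ UnifNoncriticalOn a₀ T astar) := by
  refine ⟨⟨EvolAux.dicho_to_exp hT hastar, EvolAux.exp_to_dicho hT hastar hgrowth hdecay⟩,
    ⟨EvolAux.exp_to_noncrit hT hastar, EvolAux.noncrit_to_exp hT hastar hgrowth hdecay⟩⟩
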